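/- Let γ : [0,∞) → [0,∞) be continuously differentiable, nonincreasing, integrable, with lim_{z→∞} γ(z) = 0, and let g : ℝ → ℝ be bounded and continuous. Define W(x) := ∫_x^∞ γ(y−x) g(y) dy. If g attains a global minimum at x̃ ∈ ℝ (i.e. g(y) ≥ g(x̃) for all y ∈ ℝ), then W is differentiable at x̃ and W'(x̃) ≥ 0. -/

import Mathlib

open MeasureTheory Set Filter
open scoped Topology

/-- **Sign of the spatial derivative of the nonlocal term at a global minimum.**
For a continuously differentiable, nonincreasing, integrable kernel `γ : [0,∞) → [0,∞)`
vanishing at infinity, and a bounded continuous `g`, the function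
`W(x) = ∫_x^∞ γ(y−x) g(y) dy` is differentiable at any global minimum point `x₀` of `g`,
with `W'(x₀) ≥ 0`. -/
theorem nonlocal_term_deriv_nonneg_at_min
    (γ g : ℝ → ℝ) (x₀ : ℝ)
    (hγ_smooth : ContDiffOn ℝ 1 γ (Set.Ici 0))
    (hγ_nonneg : ∀ z ∈ Set.Ici (0 : ℝ), 0 ≤ γ z)
    (hγ_mono : AntitoneOn γ (Set.Ici 0))
    (hγ_int : MeasureTheory.IntegrableOn γ (Set.Ici 0))
    (hγ_lim : Filter.Tendsto γ Filter.atTop (nhds 0))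
    (hg_cont : Continuous g)
    (hg_bdd : ∃ M : ℝ, ∀ y, |g y| ≤ M)
    (hmin : ∀ y : ℝ, g x₀ ≤ g y) :
    DifferentiableAt ℝ (fun x => ∫ y in Set.Ioi x, γ (y - x) * g y) x₀ ∧
      0 ≤ deriv (fun x => ∫ y in Set.Ioi x, γ (y - x) * g y) x₀ := by
  obtain ⟨M, hM⟩ := hg_bdd
  have hM0 : 0 ≤ M := (abs_nonneg _).trans (hM 0)
  set φ : ℝ → ℝ := deriv γ with hφdef
  -- γ is differentiable on (0, ∞) with derivative φ
  have hd : ∀ z ∈ Ioi (0:ℝ), HasDerivAt γ (φ z) z := by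
    intro z hz
    have h1 : Ici (0:ℝ) ∈ 𝓝 z := Ici_mem_nhds hz
    exact ((hγ_smooth.contDiffAt h1).differentiableAt one_ne_zero).hasDerivAt
  have hγ_cont : ContinuousOn γ (Ici 0) := hγ_smooth.continuousOn
  have hγ0 : ContinuousWithinAt γ (Ici 0) 0 := hγ_cont 0 self_mem_Ici
  -- φ ≤ 0 on (0, ∞)
  have hφ_nonpos : ∀ z ∈ Ioi (0:ℝ), φ z ≤ 0 := by
    intro z hz
    have hslope : Tendsto (slope γ z) (𝓝[>] z) (𝓝 (φ z)) :=
      (hasDerivAt_iff_tendsto_slope.mp (hd z hz)).mono_left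
        (nhdsWithin_mono _ (fun y hy => Set.mem_compl_singleton_iff.mpr (ne_of_gt hy)))
    refine le_of_tendsto hslope ?_
    filter_upwards [self_mem_nhdsWithin] with y hy
    have hz0 : (0:ℝ) ≤ z := le_of_lt hz
    have hy0 : (0:ℝ) ≤ y := le_of_lt (hz.trans hy)
    have hle : γ y ≤ γ z := hγ_mono hz0 hy0 (le_of_lt hy)
    have hzy : z < y := hy
    rw [slope_def_field]
    exact div_nonpos_of_nonpos_of_nonneg (by linarith) (by linarith)
  -- φ continuous on (0, ∞)
  have hφ_cont : ContinuousOn φ (Ioi 0) :=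
    (hγ_smooth.mono Ioi_subset_Ici_self).continuousOn_deriv_of_isOpen isOpen_Ioi le_rfl
  -- φ integrable on (0, ∞)
  have hφ_int : IntegrableOn φ (Ioi 0) :=
    integrableOn_Ioi_deriv_of_nonpos hγ0 hd hφ_nonpos hγ_lim
  have hγ_int' : IntegrableOn γ (Ioi 0) := hγ_int.mono_set Ioi_subset_Ici_self
  -- primitive of γ
  set P : ℝ → ℝ := fun T => ∫ t in (0:ℝ)..T, γ t with hPdef
  have hPlim : Tendsto P atTop (𝓝 (∫ z in Ioi (0:ℝ), γ z)) :=
    intervalIntegral_tendsto_integral_Ioi 0 hγ_int' tendsto_id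
  -- tail integrals tend to 0
  have htail : Tendsto (fun T => ∫ z in Ioi T, γ z) atTop (𝓝 0) := by
    have h2 : Tendsto (fun T => (∫ z in Ioi (0:ℝ), γ z) - P T) atTop
        (𝓝 ((∫ z in Ioi (0:ℝ), γ z) - (∫ z in Ioi (0:ℝ), γ z))) :=
      tendsto_const_nhds.sub hPlim
    rw [sub_self] at h2
    apply h2.congr'
    filter_upwards [eventually_ge_atTop (0:ℝ)] with T hT
    have hsplit : ∫ z in Ioi (0:ℝ), γ z = (∫ z in Ioc (0:ℝ) T, γ z) + ∫ z in Ioi T, γ z := by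
      rw [← setIntegral_union (Ioc_disjoint_Ioi le_rfl) measurableSet_Ioi
        (hγ_int'.mono_set Ioc_subset_Ioi_self) (hγ_int'.mono_set (Ioi_subset_Ioi hT)),
        Ioc_union_Ioi_eq_Ioi hT]
    have hPT : P T = ∫ z in Ioc (0:ℝ) T, γ z := intervalIntegral.integral_of_le hT
    rw [hPT, hsplit]; ring
  -- T γ(T) → 0 at infinity
  have hzγ : Tendsto (fun T : ℝ => T * γ T) atTop (𝓝 0) := by
    have htail2 : Tendsto (fun T : ℝ => 2 * ∫ z in Ioi (T/2), γ z) atTop (𝓝 (2 * 0)) :=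
      (htail.comp (tendsto_id.atTop_div_const two_pos)).const_mul 2
    rw [mul_zero] at htail2
    apply squeeze_zero' ?_ ?_ htail2
    · filter_upwards [eventually_ge_atTop (0:ℝ)] with T hT
      exact mul_nonneg hT (hγ_nonneg T hT)
    · filter_upwards [eventually_ge_atTop (0:ℝ)] with T hT
      have hT2 : (0:ℝ) ≤ T/2 := by linarith
      have hii : IntervalIntegrable γ volume (T/2) T := by
        rw [intervalIntegrable_iff_integrableOn_Ioc_of_le (by linarith)]
        exact hγ_int.mono_set (Set.Ioc_subset_Icc_self.trans
          (Icc_subset_Ici_self.trans (Ici_subset_Ici.mpr hT2)))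
      have h1 : (T - T/2) * γ T ≤ ∫ z in (T/2)..T, γ z := by
        have := intervalIntegral.integral_mono_on (by linarith : T/2 ≤ T)
          (intervalIntegrable_const (c := γ T)) hii
          (fun z hz => hγ_mono (hT2.trans hz.1) hT hz.2)
        simpa [smul_eq_mul, mul_comm] using this
      have h2 : ∫ z in (T/2)..T, γ z ≤ ∫ z in Ioi (T/2), γ z := by
        rw [intervalIntegral.integral_of_le (by linarith : T/2 ≤ T)]
        apply setIntegral_mono_set (hγ_int'.mono_set (Ioi_subset_Ioi hT2))
        · filter_upwards [ae_restrict_mem measurableSet_Ioi] with z hz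
          exact hγ_nonneg z (le_of_lt (lt_of_le_of_lt hT2 hz))
        · exact Filter.Eventually.of_forall (fun z hz => Ioc_subset_Ioi_self hz)
      calc T * γ T = 2 * ((T - T/2) * γ T) := by ring
        _ ≤ 2 * ∫ z in Ioi (T/2), γ z := by linarith
  -- z * φ(z) is integrable on (0, ∞)
  have hPcont0 : ContinuousWithinAt P (Ici 0) 0 := by
    have h1 : ContinuousWithinAt P (Icc 0 1) 0 := by
      apply intervalIntegral.continuousWithinAt_primitive (by simp)
      rw [min_self, max_eq_right (by norm_num : (0:ℝ) ≤ 1)]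
      rw [intervalIntegrable_iff_integrableOn_Ioc_of_le (by norm_num : (0:ℝ) ≤ 1)]
      exact hγ_int.mono_set (Set.Ioc_subset_Icc_self.trans Icc_subset_Ici_self)
    exact h1.mono_of_mem_nhdsWithin (by
      rw [← Set.Ici_inter_Iic]
      exact inter_mem_nhdsWithin _ (Iic_mem_nhds one_pos))
  have hPd : ∀ z ∈ Ioi (0:ℝ), HasDerivAt P (γ z) z := by
    intro z hz
    apply intervalIntegral.integral_hasDerivAt_right
    · rw [intervalIntegrable_iff_integrableOn_Ioc_of_le (le_of_lt hz)]
      exact hγ_int.mono_set (Set.Ioc_subset_Icc_self.trans Icc_subset_Ici_self)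
    · exact ⟨Ioi 0, Ioi_mem_nhds hz,
        ((hγ_cont.mono Ioi_subset_Ici_self).aestronglyMeasurable measurableSet_Ioi)⟩
    · exact (hd z hz).continuousAt
  have hzφ_int : IntegrableOn (fun z => z * φ z) (Ioi 0) := by
    apply integrableOn_Ioi_deriv_of_nonpos (g := fun z => z * γ z - P z)
      (l := 0 - ∫ z in Ioi (0:ℝ), γ z)
    · exact (continuousWithinAt_id.mul hγ0).sub hPcont0
    · intro z hz
      have h1 : HasDerivAt (fun w => w * γ w) (1 * γ z + z * φ z) z :=
        (hasDerivAt_id z).mul (hd z hz)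
      have h3 := h1.sub (hPd z hz)
      have : 1 * γ z + z * φ z - γ z = z * φ z := by ring
      rwa [this] at h3
    · exact fun z hz => mul_nonpos_of_nonneg_of_nonpos (le_of_lt hz) (hφ_nonpos z hz)
    · exact hzγ.sub hPlim
  -- primitive of g
  set F : ℝ → ℝ := fun x => ∫ t in (0:ℝ)..x, g t with hFdef
  have hF : ∀ x, HasDerivAt F (g x) x := fun x =>
    intervalIntegral.integral_hasDerivAt_right (hg_cont.intervalIntegrable _ _)
      (hg_cont.stronglyMeasurableAtFilter _ _) hg_cont.continuousAt
  have hFc : Continuous F := by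
    have : Differentiable ℝ F := fun x => (hF x).differentiableAt
    exact this.continuous
  have hFbound : ∀ x z : ℝ, 0 ≤ z → |F (x+z) - F x| ≤ M * z := by
    intro x z hz
    have h1 : F (x+z) - F x = ∫ t in x..(x+z), g t :=
      intervalIntegral.integral_interval_sub_left (hg_cont.intervalIntegrable _ _)
        (hg_cont.intervalIntegrable _ _)
    rw [h1]
    have := intervalIntegral.norm_integral_le_of_norm_le_const
      (C := M) (f := g) (a := x) (b := x + z) (fun t _ => hM t)
    simpa [abs_of_nonneg hz] using this
  -- translation: ∫_{y > x} γ(y-x) g(y) dy = ∫_{z > 0} γ(z) g(x+z) dz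
  have key1 : ∀ x : ℝ, ∫ y in Ioi x, γ (y - x) * g y = ∫ z in Ioi (0:ℝ), γ z * g (x + z) := by
    intro x
    have h := (measurePreserving_add_right volume x).setIntegral_preimage_emb
      (measurableEmbedding_addRight x) (fun y => γ (y - x) * g y) (Ioi x)
    have hpre : (fun z => z + x) ⁻¹' (Ioi x) = Ioi (0:ℝ) := by
      ext z; simp
    rw [← h, hpre]
    congr 1; funext z
    simp [add_sub_cancel_right, add_comm]
  -- measurability/integrability helpers
  have hmeasφv : ∀ v : ℝ → ℝ, Continuous v →
      AEStronglyMeasurable (fun z => φ z * v z) (volume.restrict (Ioi (0:ℝ))) :=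
    fun v hv => (hφ_cont.aestronglyMeasurable measurableSet_Ioi).mul
      hv.aestronglyMeasurable.restrict
  have hu'v : ∀ v : ℝ → ℝ, Continuous v → (∀ z, 0 ≤ z → |v z| ≤ M * z) →
      IntegrableOn (fun z => φ z * v z) (Ioi 0) := by
    intro v hv hvb
    apply Integrable.mono' ((hzφ_int.neg).const_mul M) (hmeasφv v hv)
    filter_upwards [ae_restrict_mem measurableSet_Ioi] with z hz
    have hz0 : (0:ℝ) < z := hz
    have hφz : |φ z| = -φ z := abs_of_nonpos (hφ_nonpos z hz)
    calc ‖φ z * v z‖ = |φ z| * |v z| := abs_mul _ _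
      _ ≤ |φ z| * (M * z) := by
          apply mul_le_mul_of_nonneg_left (hvb z hz0.le) (abs_nonneg _)
      _ = M * -(z * φ z) := by rw [hφz]; ring
  -- integration by parts: ∫_{z>0} γ(z) g(x+z) dz = ∫_{z>0} φ(z) (F x - F(x+z)) dz
  have key2 : ∀ x : ℝ, ∫ z in Ioi (0:ℝ), γ z * g (x + z)
      = ∫ z in Ioi (0:ℝ), φ z * (F x - F (x + z)) := by
    intro x
    have hvd : ∀ z ∈ Ioi (0:ℝ), HasDerivAt (fun z => F (x + z) - F x) (g (x + z)) z := by
      intro z hz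
      have h0 : HasDerivAt (fun z : ℝ => x + z) 1 z := by
        simpa using (hasDerivAt_id z).const_add x
      have h1 := (hF (x + z)).comp z h0
      simpa using h1.sub_const (F x)
    have hvcont : Continuous (fun z => F (x + z) - F x) :=
      (hFc.comp (continuous_const.add continuous_id)).sub continuous_const
    have hvb : ∀ z, 0 ≤ z → |F (x + z) - F x| ≤ M * z := fun z hz => hFbound x z hz
    have huv' : IntegrableOn (fun z => γ z * g (x + z)) (Ioi 0) := by
      apply Integrable.mono' (hγ_int'.const_mul M)
        ((hγ_cont.mono Ioi_subset_Ici_self).aestronglyMeasurable measurableSet_Ioi |>.mul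
          (hg_cont.comp (continuous_const.add continuous_id)).aestronglyMeasurable.restrict)
      filter_upwards [ae_restrict_mem measurableSet_Ioi] with z hz
      have hz0 : (0:ℝ) ≤ z := le_of_lt hz
      calc ‖γ z * g (x + z)‖ = |γ z| * |g (x + z)| := abs_mul _ _
        _ ≤ γ z * M := by
            rw [abs_of_nonneg (hγ_nonneg z hz0)]
            exact mul_le_mul_of_nonneg_left (hM _) (hγ_nonneg z hz0)
        _ = M * γ z := mul_comm _ _
    have hu'v' : IntegrableOn (fun z => φ z * (F (x + z) - F x)) (Ioi 0) :=
      hu'v _ hvcont hvb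
    have h_zero : Tendsto (γ * fun z => F (x + z) - F x) (𝓝[>] (0:ℝ)) (𝓝 0) := by
      have h1 : Tendsto γ (𝓝[>] (0:ℝ)) (𝓝 (γ 0)) :=
        hγ0.tendsto.mono_left (nhdsWithin_mono _ Ioi_subset_Ici_self)
      have h2 : Tendsto (fun z => F (x + z) - F x) (𝓝[>] (0:ℝ)) (𝓝 (F (x + 0) - F x)) :=
        ((hvcont.tendsto 0).mono_left nhdsWithin_le_nhds)
      have h3 := h1.mul h2
      exact (by simpa using h3 : Tendsto (fun z => γ z * (F (x + z) - F x)) (𝓝[>] (0:ℝ)) (𝓝 0))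
    have h_infty : Tendsto (γ * fun z => F (x + z) - F x) atTop (𝓝 0) := by
      have hM2 : Tendsto (fun z : ℝ => M * (z * γ z)) atTop (𝓝 0) := by
        simpa using hzγ.const_mul M
      apply squeeze_zero_norm' ?_ hM2
      filter_upwards [eventually_ge_atTop (0:ℝ)] with z hz
      calc ‖(γ * fun z => F (x + z) - F x) z‖ = γ z * |F (x + z) - F x| := by
            simp [Pi.mul_apply, abs_mul, abs_of_nonneg (hγ_nonneg z hz)]
        _ ≤ γ z * (M * z) := mul_le_mul_of_nonneg_left (hvb z hz) (hγ_nonneg z hz)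
        _ = M * (z * γ z) := by ring
    calc ∫ z in Ioi (0:ℝ), γ z * g (x + z)
        = 0 - 0 - ∫ z in Ioi (0:ℝ), φ z * (F (x + z) - F x) :=
          integral_Ioi_mul_deriv_eq_deriv_mul hd hvd (by simpa [Pi.mul_def] using huv')
            (by simpa [Pi.mul_def] using hu'v') h_zero h_infty
      _ = ∫ z in Ioi (0:ℝ), -(φ z * (F (x + z) - F x)) := by rw [integral_neg]; ring
      _ = ∫ z in Ioi (0:ℝ), φ z * (F x - F (x + z)) := by
          congr 1; funext z; ring
  -- differentiation under the integral sign
  set Φ : ℝ → ℝ := fun x => ∫ z in Ioi (0:ℝ), φ z * (F x - F (x + z)) with hΦdef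
  have key3 : HasDerivAt Φ (∫ z in Ioi (0:ℝ), φ z * (g x₀ - g (x₀ + z))) x₀ := by
    have hbint : Integrable (fun z => |φ z| * (2 * M)) (volume.restrict (Ioi (0:ℝ))) :=
      hφ_int.abs.mul_const _
    refine (hasDerivAt_integral_of_dominated_loc_of_deriv_le (Metric.ball_mem_nhds x₀ one_pos)
      (F := fun x z => φ z * (F x - F (x + z)))
      (F' := fun x z => φ z * (g x - g (x + z)))
      (bound := fun z => |φ z| * (2 * M)) ?_ ?_ ?_ ?_ hbint ?_).2
    · filter_upwards with x
      exact hmeasφv _ (continuous_const.sub (hFc.comp (continuous_const.add continuous_id)))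
    · apply hu'v _ (continuous_const.sub (hFc.comp (continuous_const.add continuous_id)))
      intro z hz
      show |F x₀ - F (x₀ + z)| ≤ M * z; rw [abs_sub_comm]
      exact hFbound x₀ z hz
    · exact hmeasφv _ (continuous_const.sub (hg_cont.comp (continuous_const.add continuous_id)))
    · filter_upwards with z
      intro x hx
      calc ‖φ z * (g x - g (x + z))‖ = |φ z| * |g x - g (x + z)| := abs_mul _ _
        _ ≤ |φ z| * (2 * M) := by
            apply mul_le_mul_of_nonneg_left ?_ (abs_nonneg _)
            calc |g x - g (x + z)| ≤ |g x| + |g (x + z)| := abs_sub _ _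
              _ ≤ M + M := add_le_add (hM _) (hM _)
              _ = 2 * M := by ring
    · filter_upwards with z
      intro x hx
      have h1 : HasDerivAt (fun x => F (x + z)) (g (x + z)) x := by
        have h0 : HasDerivAt (fun x : ℝ => x + z) 1 x := by
          simpa using (hasDerivAt_id x).add_const z
        have h2 := (hF (x + z)).comp x h0; rw [mul_one] at h2; exact h2
      exact ((hF x).sub h1).const_mul (φ z)
  -- conclusion
  have hW : (fun x => ∫ y in Ioi x, γ (y - x) * g y) = Φ := by
    funext x
    rw [key1 x, key2 x]
  rw [hW]
  refine ⟨key3.differentiableAt, ?_⟩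
  rw [key3.deriv]
  apply setIntegral_nonneg measurableSet_Ioi
  intro z hz
  have h1 : φ z ≤ 0 := hφ_nonpos z hz
  have h2 : g x₀ - g (x₀ + z) ≤ 0 := by linarith [hmin (x₀ + z)]
  nlinarith
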